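/- For every real α with 0 < α < 1/2 and every ε > 0 there exists an n₀ such that for all n ≥ n₀ and every pair of integers (m_A, m_B) that is achievable for the deterministic combinatorial Slepian–Wolf scheme with parameters (n, ⌊αn⌋), the following three inequalities hold: m_A + m_B ≥ (1 + h(α))·n − ε·n, m_A ≥ h(α)·n − ε·n, and m_B ≥ h(α)·n − ε·n. -/

import Mathlib

/-- The binary entropy function `h(α) = −α·log₂ α − (1−α)·log₂(1−α)`. -/
noncomputable def binEnt (a : ℝ) : ℝ :=
  -a * Real.logb 2 a - (1 - a) * Real.logb 2 (1 - a)

/-- A pair of encodings is uniquely decodable for the combinatorial Slepian–Wolf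
scheme with parameters `(n, T)`. -/
def UniquelyDecodable {n mA mB : ℕ} (T : ℕ)
    (CodeA : (Fin n → Bool) → (Fin mA → Bool))
    (CodeB : (Fin n → Bool) → (Fin mB → Bool)) : Prop :=
  ∀ x y x' y' : Fin n → Bool,
    hammingDist x y ≤ T → hammingDist x' y' ≤ T →
    CodeA x = CodeA x' → CodeB y = CodeB y' → (x, y) = (x', y')

/-- `(mA, mB)` is an achievable pair of rates for the deterministic combinatorial
Slepian–Wolf scheme with parameters `(n, T)`. -/
def Achievable (n T mA mB : ℕ) : Prop :=
  ∃ (CodeA : (Fin n → Bool) → (Fin mA → Bool))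
    (CodeB : (Fin n → Bool) → (Fin mB → Bool)),
    UniquelyDecodable T CodeA CodeB

namespace SW
open Finset Real Filter

def flipOn {n : ℕ} (x : Fin n → Bool) (s : Finset (Fin n)) : Fin n → Bool :=
  fun i => if i ∈ s then !(x i) else x i

lemma dist_flipOn {n : ℕ} (x : Fin n → Bool) (s : Finset (Fin n)) :
    hammingDist x (flipOn x s) = s.card := by
  unfold hammingDist
  congr 1
  ext i
  by_cases h : i ∈ s <;> simp [flipOn, h]

lemma flipOn_inj {n : ℕ} (x : Fin n → Bool) {s s' : Finset (Fin n)}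
    (h : flipOn x s = flipOn x s') : s = s' := by
  ext i
  have := congrFun h i
  by_cases h1 : i ∈ s <;> by_cases h2 : i ∈ s' <;>
    simp_all [flipOn]

lemma choose_le_A {n mA mB T : ℕ} {CodeA : (Fin n → Bool) → (Fin mA → Bool)}
    {CodeB : (Fin n → Bool) → (Fin mB → Bool)}
    (h : UniquelyDecodable T CodeA CodeB) : n.choose T ≤ 2 ^ mA := by
  classical
  set x₀ : Fin n → Bool := fun _ => false
  have hinj : Function.Injective
      (fun s : {s : Finset (Fin n) // s.card = T} => CodeA (flipOn x₀ s.1)) := by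
    intro s s' hss
    have hd : hammingDist (flipOn x₀ s.1) x₀ ≤ T := by
      rw [hammingDist_comm, dist_flipOn, s.2]
    have hd' : hammingDist (flipOn x₀ s'.1) x₀ ≤ T := by
      rw [hammingDist_comm, dist_flipOn, s'.2]
    have := h _ _ _ _ hd hd' hss rfl
    exact Subtype.ext (flipOn_inj x₀ (congrArg Prod.fst this))
  have := Fintype.card_le_of_injective _ hinj
  simpa using this

lemma choose_le_B {n mA mB T : ℕ} {CodeA : (Fin n → Bool) → (Fin mA → Bool)}
    {CodeB : (Fin n → Bool) → (Fin mB → Bool)}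
    (h : UniquelyDecodable T CodeA CodeB) : n.choose T ≤ 2 ^ mB := by
  classical
  set x₀ : Fin n → Bool := fun _ => false
  have hinj : Function.Injective
      (fun s : {s : Finset (Fin n) // s.card = T} => CodeB (flipOn x₀ s.1)) := by
    intro s s' hss
    have hd : hammingDist x₀ (flipOn x₀ s.1) ≤ T := by
      rw [dist_flipOn, s.2]
    have hd' : hammingDist x₀ (flipOn x₀ s'.1) ≤ T := by
      rw [dist_flipOn, s'.2]
    have := h _ _ _ _ hd hd' rfl hss
    exact Subtype.ext (flipOn_inj x₀ (congrArg Prod.snd this))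
  have := Fintype.card_le_of_injective _ hinj
  simpa using this

lemma choose_le_AB {n mA mB T : ℕ} {CodeA : (Fin n → Bool) → (Fin mA → Bool)}
    {CodeB : (Fin n → Bool) → (Fin mB → Bool)}
    (h : UniquelyDecodable T CodeA CodeB) : 2 ^ n * n.choose T ≤ 2 ^ (mA + mB) := by
  classical
  have hinj : Function.Injective
      (fun p : (Fin n → Bool) × {s : Finset (Fin n) // s.card = T} =>
        (CodeA p.1, CodeB (flipOn p.1 p.2.1))) := by
    intro ⟨x, s⟩ ⟨x', s'⟩ hp
    simp only [Prod.mk.injEq] at hp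
    have hd : hammingDist x (flipOn x s.1) ≤ T := by rw [dist_flipOn, s.2]
    have hd' : hammingDist x' (flipOn x' s'.1) ≤ T := by rw [dist_flipOn, s'.2]
    have := h _ _ _ _ hd hd' hp.1 hp.2
    rw [Prod.mk.injEq] at this
    obtain ⟨hx, hy⟩ := this
    subst hx
    exact Prod.ext rfl (Subtype.ext (flipOn_inj x hy))
  have := Fintype.card_le_of_injective _ hinj
  simpa [pow_add] using this

def F (n k i : ℕ) : ℕ := n.choose i * k ^ i * (n - k) ^ (n - i)

lemma F_id (n k i : ℕ) (hi : i < n) :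
    F n k (i+1) * ((i+1) * (n-k)) = F n k i * ((n-i) * k) := by
  have h1 : n.choose (i+1) * (i+1) = n.choose i * (n - i) := Nat.choose_succ_right_eq n i
  have h2 : (n - k) ^ (n-(i+1)) * (n-k) = (n-k) ^ (n-i) := by
    rw [← pow_succ]; congr 1; omega
  have h3 : k ^ (i+1) = k ^ i * k := pow_succ k i
  show n.choose (i+1) * k^(i+1) * (n-k)^(n-(i+1)) * ((i+1) * (n-k))
      = n.choose i * k^i * (n-k)^(n-i) * ((n-i) * k)
  calc n.choose (i+1) * k^(i+1) * (n-k)^(n-(i+1)) * ((i+1) * (n-k))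
      = (n.choose (i+1) * (i+1)) * k^(i+1) * ((n-k)^(n-(i+1)) * (n-k)) := by ring
    _ = (n.choose i * (n-i)) * (k^i * k) * (n-k)^(n-i) := by rw [h1, h2, h3]
    _ = n.choose i * k^i * (n-k)^(n-i) * ((n-i) * k) := by ring

lemma F_step_up (n k i : ℕ) (hk : k < n) (hi : i < k) : F n k i ≤ F n k (i+1) := by
  have hpos : 0 < (i+1) * (n-k) := by
    have : 0 < n - k := by omega
    positivity
  have hle : (i+1) * (n-k) ≤ (n-i) * k := by
    calc (i+1) * (n-k) ≤ k * (n-i) := Nat.mul_le_mul (by omega) (by omega)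
      _ = (n-i) * k := mul_comm _ _
  have hid := F_id n k i (by omega)
  have : F n k i * ((i+1) * (n-k)) ≤ F n k (i+1) * ((i+1) * (n-k)) := by
    calc F n k i * ((i+1) * (n-k)) ≤ F n k i * ((n-i) * k) := Nat.mul_le_mul_left _ hle
      _ = F n k (i+1) * ((i+1) * (n-k)) := hid.symm
  exact Nat.le_of_mul_le_mul_right this hpos

lemma F_step_down (n k i : ℕ) (hk : k < n) (hki : k ≤ i) (hi : i < n) :
    F n k (i+1) ≤ F n k i := by
  have hpos : 0 < (i+1) * (n-k) := by
    have : 0 < n - k := by omega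
    positivity
  have hle : (n-i) * k ≤ (i+1) * (n-k) := by
    calc (n-i) * k ≤ (n-k) * (i+1) := Nat.mul_le_mul (by omega) (by omega)
      _ = (i+1) * (n-k) := mul_comm _ _
  have hid := F_id n k i hi
  have : F n k (i+1) * ((i+1) * (n-k)) ≤ F n k i * ((i+1) * (n-k)) := by
    calc F n k (i+1) * ((i+1) * (n-k)) = F n k i * ((n-i) * k) := hid
      _ ≤ F n k i * ((i+1) * (n-k)) := Nat.mul_le_mul_left _ hle
  exact Nat.le_of_mul_le_mul_right this hpos

lemma F_le (n k : ℕ) (hk : k < n) : ∀ i, i ≤ n → F n k i ≤ F n k k := by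
  have up : ∀ d, d ≤ k → F n k (k - d) ≤ F n k k := by
    intro d
    induction d with
    | zero => simp
    | succ d ih =>
      intro hd
      have h1 : F n k (k - (d+1)) ≤ F n k (k - (d+1) + 1) :=
        F_step_up n k _ hk (by omega)
      have h2 : k - (d+1) + 1 = k - d := by omega
      rw [h2] at h1
      exact h1.trans (ih (by omega))
  have down : ∀ d, k + d ≤ n → F n k (k + d) ≤ F n k k := by
    intro d
    induction d with
    | zero => simp
    | succ d ih =>
      intro hd
      have h1 : F n k (k + d + 1) ≤ F n k (k + d) :=
        F_step_down n k _ hk (by omega) (by omega)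
      have h2 : k + (d+1) = k + d + 1 := by omega
      rw [h2]
      exact h1.trans (ih (by omega))
  intro i hi
  rcases le_or_gt i k with h | h
  · have := up (k - i) (by omega)
    rwa [show k - (k - i) = i by omega] at this
  · have := down (i - k) (by omega)
    rwa [show k + (i - k) = i by omega] at this

lemma key (n k : ℕ) (hk : k < n) :
    n ^ n ≤ (n + 1) * (n.choose k * k ^ k * (n - k) ^ (n - k)) := by
  have hb : (k + (n - k)) ^ n = ∑ i ∈ range (n+1), k ^ i * (n-k) ^ (n-i) * n.choose i :=
    add_pow k (n-k) n
  have hn : k + (n - k) = n := by omega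
  rw [hn] at hb
  rw [hb]
  have hsum : ∑ i ∈ range (n+1), k ^ i * (n-k) ^ (n-i) * n.choose i
      ≤ (range (n+1)).card • (n.choose k * k ^ k * (n - k) ^ (n - k)) := by
    apply Finset.sum_le_card_nsmul
    intro i hi
    have hi' : i ≤ n := by simpa [Nat.lt_succ_iff] using Finset.mem_range.mp hi
    calc k ^ i * (n-k) ^ (n-i) * n.choose i = F n k i := by unfold F; ring
      _ ≤ F n k k := F_le n k hk i hi'
      _ = n.choose k * k ^ k * (n - k) ^ (n - k) := rfl
  simpa [smul_eq_mul] using hsum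

lemma logb_choose_ge (n k : ℕ) (h0 : 0 < k) (hk : k < n) :
    (n : ℝ) * binEnt ((k : ℝ) / (n : ℝ)) - Real.logb 2 (n + 1)
      ≤ Real.logb 2 (n.choose k) := by
  have hn0 : (0:ℝ) < n := by exact_mod_cast Nat.zero_lt_of_lt hk
  have hk0 : (0:ℝ) < k := by exact_mod_cast h0
  have hm0 : (0:ℝ) < (n:ℝ) - k := by
    have : (k:ℝ) < n := by exact_mod_cast hk
    linarith
  have hC : (0:ℝ) < (n.choose k : ℝ) := by
    exact_mod_cast Nat.choose_pos hk.le
  have hkey : ((n:ℝ)) ^ n ≤ ((n:ℝ) + 1) * ((n.choose k : ℝ) * (k:ℝ) ^ k * ((n:ℝ) - k) ^ (n - k)) := by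
    have := key n k hk
    have h := (Nat.cast_le (α := ℝ)).mpr this
    push_cast [Nat.cast_sub hk.le] at h
    convert h using 3
  have hlhs : (0:ℝ) < (n:ℝ) ^ n := by positivity
  have hlog := (Real.logb_le_logb (b := 2) one_lt_two hlhs (lt_of_lt_of_le hlhs hkey)).mpr hkey
  rw [Real.logb_pow] at hlog
  rw [Real.logb_mul (by positivity) (by positivity), Real.logb_mul (by positivity) (by positivity),
    Real.logb_mul (by positivity) (by positivity), Real.logb_pow, Real.logb_pow] at hlog
  have hone : (1:ℝ) - (k:ℝ)/(n:ℝ) = ((n:ℝ) - k)/(n:ℝ) := by field_simp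
  have hent : (n:ℝ) * binEnt ((k:ℝ)/(n:ℝ))
      = (n:ℝ) * Real.logb 2 n - (k:ℝ) * Real.logb 2 k - ((n:ℝ) - k) * Real.logb 2 ((n:ℝ) - k) := by
    unfold binEnt
    rw [hone, Real.logb_div (by positivity) (by positivity),
      Real.logb_div (by positivity) (by positivity)]
    field_simp
    ring
  have hcast : ((n - k : ℕ) : ℝ) = (n:ℝ) - k := by
    push_cast [Nat.cast_sub hk.le]; ring
  rw [hcast] at hlog
  rw [hent]
  linarith [hlog]

lemma tendsto_floor_div (α : ℝ) (hα0 : 0 < α) :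
    Tendsto (fun n : ℕ => ((⌊α * n⌋₊ : ℝ) / (n : ℝ))) atTop (nhds α) := by
  have hlow : Tendsto (fun n : ℕ => α - 1 / (n : ℝ)) atTop (nhds α) := by
    have : Tendsto (fun n : ℕ => 1 / (n : ℝ)) atTop (nhds 0) := tendsto_one_div_atTop_nhds_zero_nat
    have h := (tendsto_const_nhds (x := α) (f := atTop (α := ℕ))).sub this
    simpa using h
  apply tendsto_of_tendsto_of_tendsto_of_le_of_le' hlow tendsto_const_nhds
  · filter_upwards [eventually_ge_atTop 1] with n hn
    have hn0 : (0:ℝ) < n := by exact_mod_cast hn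
    have h1 : α * n - 1 < (⌊α * n⌋₊ : ℝ) := Nat.sub_one_lt_floor _
    rw [show α - 1/(n:ℝ) = (α * n - 1)/n by field_simp]
    gcongr
  · filter_upwards [eventually_ge_atTop 1] with n hn
    have hn0 : (0:ℝ) < n := by exact_mod_cast hn
    have h2 : (⌊α * n⌋₊ : ℝ) ≤ α * n := Nat.floor_le (by positivity)
    rw [div_le_iff₀ hn0]
    linarith

lemma continuousAt_binEnt {a : ℝ} (h0 : a ≠ 0) (h1 : a ≠ 1) : ContinuousAt binEnt a := by
  unfold binEnt
  have hl : ContinuousAt (fun x : ℝ => Real.logb 2 x) a := Real.continuousAt_logb h0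
  have hl2 : ContinuousAt (fun x : ℝ => Real.logb 2 (1 - x)) a := by
    have : ContinuousAt (fun x : ℝ => Real.logb 2 x) (1 - a) :=
      Real.continuousAt_logb (by intro h; apply h1; linarith [sub_eq_zero.mp h])
    exact this.comp ((continuous_const.sub continuous_id).continuousAt)
  exact ((continuousAt_id.neg.mul hl).sub
    ((continuous_const.sub continuous_id).continuousAt.mul hl2))

end SW

open SW Finset Real Filter in
theorem stmt0 (α : ℝ) (hα0 : 0 < α) (hα1 : α < 1 / 2) (ε : ℝ) (hε : 0 < ε) :
    ∃ n₀ : ℕ, ∀ n : ℕ, n₀ ≤ n → ∀ mA mB : ℕ,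
      Achievable n ⌊α * n⌋₊ mA mB →
      ((mA : ℝ) + mB ≥ (1 + binEnt α) * n - ε * n ∧
       (mA : ℝ) ≥ binEnt α * n - ε * n ∧
       (mB : ℝ) ≥ binEnt α * n - ε * n) := by
  -- Eventually facts
  have E1 : ∀ᶠ n : ℕ in atTop, 1 ≤ ⌊α * n⌋₊ ∧ ⌊α * n⌋₊ < n := by
    have hmul : Tendsto (fun n : ℕ => α * (n : ℝ)) atTop atTop :=
      Tendsto.const_mul_atTop hα0 tendsto_natCast_atTop_atTop
    filter_upwards [hmul.eventually_ge_atTop 1, eventually_ge_atTop 1] with n h1 hn1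
    constructor
    · exact Nat.le_floor (by exact_mod_cast h1)
    · have hn0 : (0:ℝ) < n := by exact_mod_cast hn1
      rw [Nat.floor_lt (by positivity)]
      nlinarith
  have htendB : Tendsto (fun n : ℕ => binEnt ((⌊α * n⌋₊ : ℝ) / n)) atTop (nhds (binEnt α)) :=
    (continuousAt_binEnt (ne_of_gt hα0) (by linarith)).tendsto.comp (tendsto_floor_div α hα0)
  have E2 : ∀ᶠ n : ℕ in atTop, binEnt α - ε / 2 ≤ binEnt ((⌊α * n⌋₊ : ℝ) / n) :=
    htendB.eventually (eventually_ge_nhds (by linarith))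
  have E3 : ∀ᶠ n : ℕ in atTop, Real.logb 2 ((n : ℝ) + 1) ≤ ε / 2 * n := by
    have hlog2 : (0:ℝ) < Real.log 2 := Real.log_pos one_lt_two
    have hc : (0:ℝ) < ε / 2 * Real.log 2 / 2 := by positivity
    have hbd := Real.isLittleO_log_id_atTop.def hc
    have hmap : Tendsto (fun n : ℕ => (n : ℝ) + 1) atTop atTop :=
      tendsto_atTop_add_const_right _ 1 tendsto_natCast_atTop_atTop
    filter_upwards [hmap.eventually hbd, eventually_ge_atTop 1] with n hb hn1
    have hn0 : (1:ℝ) ≤ n := by exact_mod_cast hn1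
    have hpos : (1:ℝ) ≤ (n:ℝ) + 1 := by linarith
    simp only [Real.norm_eq_abs, id_eq] at hb
    rw [abs_of_nonneg (Real.log_nonneg hpos),
      abs_of_nonneg (by linarith : (0:ℝ) ≤ (n:ℝ)+1)] at hb
    rw [Real.logb, div_le_iff₀ hlog2]
    calc Real.log ((n:ℝ) + 1) ≤ ε / 2 * Real.log 2 / 2 * ((n:ℝ) + 1) := hb
      _ ≤ ε / 2 * Real.log 2 / 2 * (2 * n) := by nlinarith
      _ = ε / 2 * n * Real.log 2 := by ring
  obtain ⟨n₀, hn₀⟩ := eventually_atTop.mp (E1.and (E2.and E3))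
  refine ⟨n₀, fun n hn mA mB hach => ?_⟩
  obtain ⟨⟨hk1, hkn⟩, hE2, hE3⟩ := hn₀ n hn
  obtain ⟨CA, CB, hUD⟩ := hach
  set k := ⌊α * n⌋₊ with hkdef
  have hn0 : (0:ℝ) < n := by
    have : 0 < n := lt_of_le_of_lt (Nat.zero_le _) hkn
    exact_mod_cast this
  have hC : (0:ℝ) < (n.choose k : ℝ) := by exact_mod_cast Nat.choose_pos hkn.le
  -- main lower bound on logb of binomial
  have hL : binEnt α * n - ε * n ≤ Real.logb 2 (n.choose k) := by
    have h1 := logb_choose_ge n k hk1 hkn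
    have h2 : (n:ℝ) * (binEnt α - ε/2) ≤ (n:ℝ) * binEnt ((k:ℝ)/n) :=
      mul_le_mul_of_nonneg_left hE2 hn0.le
    have h3 : Real.logb 2 ((n:ℝ) + 1) ≤ ε / 2 * n := hE3
    nlinarith
  have h2A : (n.choose k : ℝ) ≤ 2 ^ mA := by exact_mod_cast choose_le_A hUD
  have h2B : (n.choose k : ℝ) ≤ 2 ^ mB := by exact_mod_cast choose_le_B hUD
  have h2AB : (2:ℝ) ^ n * (n.choose k : ℝ) ≤ 2 ^ (mA + mB) := by
    exact_mod_cast choose_le_AB hUD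
  have hlogpow : ∀ m : ℕ, Real.logb 2 ((2:ℝ) ^ m) = m := by
    intro m
    rw [Real.logb_pow, Real.logb_self_eq_one one_lt_two, mul_one]
  have hmA : Real.logb 2 (n.choose k) ≤ mA := by
    have := Real.logb_le_logb_of_le one_lt_two hC h2A
    rwa [hlogpow mA] at this
  have hmB : Real.logb 2 (n.choose k) ≤ mB := by
    have := Real.logb_le_logb_of_le one_lt_two hC h2B
    rwa [hlogpow mB] at this
  have hmAB : (n:ℝ) + Real.logb 2 (n.choose k) ≤ mA + mB := by
    have h := Real.logb_le_logb_of_le one_lt_two (by positivity) h2AB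
    rwa [Real.logb_mul (by positivity) (by positivity), hlogpow n, hlogpow (mA + mB),
      Nat.cast_add] at h
  refine ⟨?_, by linarith, by linarith⟩
  have : (1 + binEnt α) * n - ε * n = n + (binEnt α * n - ε * n) := by ring
  rw [ge_iff_le, this]
  linarith
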